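/- arXiv:2505.01047 — 3 statements merged into one kernel-verified Lean document; each statement's English description precedes it below -/
import Mathlib

section
/- Let X and Z be real Banach spaces, u ∈ X, R₀ > 0, and let F : X → Z be Fréchet differentiable on B(u,R₀) with derivative DF Lipschitz on B(u,R₀) with constant L > 0. Assume F(u) = 0 and DF(u) ≠ 0. Then for every û ∈ X with ‖û − u‖ < min(R₀, 2‖DF(u)‖ / L), one has the lower a posteriori error bound (1/2)‖DF(u)‖⁻¹ ‖F(û)‖ ≤ ‖u − û‖, where ‖DF(u)‖ is the operator norm of DF(u). -/
/-- Lower a posteriori error bound (left inequality of Theorem 1 of the appendix):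
if `F u = 0`, `DF u ≠ 0`, and `DF` is Lipschitz with constant `L > 0` on `B(u, R₀)`,
then for every `uhat` with `‖uhat - u‖ < min (R₀, 2‖DF u‖ / L)` one has
`(1/2) ‖DF u‖⁻¹ ‖F uhat‖ ≤ ‖u - uhat‖`. -/
theorem lower_a_posteriori_bound
    {X Z : Type*} [NormedAddCommGroup X] [NormedSpace ℝ X] [CompleteSpace X]
    [NormedAddCommGroup Z] [NormedSpace ℝ Z] [CompleteSpace Z]
    (u : X) (R₀ : ℝ) (hR₀ : 0 < R₀) (F : X → Z) (DF : X → X →L[ℝ] Z)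
    (L : ℝ) (hL : 0 < L)
    (hdiff : ∀ v ∈ Metric.ball u R₀, HasFDerivAt F (DF v) v)
    (hlip : ∀ v ∈ Metric.ball u R₀, ∀ w ∈ Metric.ball u R₀,
      ‖DF v - DF w‖ ≤ L * ‖v - w‖)
    (hFu : F u = 0) (hDFu : DF u ≠ 0) :
    ∀ uhat : X, ‖uhat - u‖ < min R₀ (2 * ‖DF u‖ / L) →
      (1 / 2) * ‖DF u‖⁻¹ * ‖F uhat‖ ≤ ‖u - uhat‖ := by
  intro uhat hball
  set h : X := uhat - u with hh
  have hR : ‖h‖ < R₀ := lt_of_lt_of_le hball (min_le_left _ _)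
  have hDFpos : 0 < ‖DF u‖ := norm_pos_iff.mpr hDFu
  have hL2 : L * ‖h‖ ≤ 2 * ‖DF u‖ := by
    have := lt_of_lt_of_le hball (min_le_right _ _)
    have := (lt_div_iff₀ hL).mp this
    linarith [this]
  -- points on the segment are in the ball
  have hmem : ∀ t : ℝ, t ∈ Set.Icc (0:ℝ) 1 → u + t • h ∈ Metric.ball u R₀ := by
    intro t ht
    have hn : ‖t • h‖ ≤ ‖h‖ := by
      rw [norm_smul, Real.norm_eq_abs, abs_of_nonneg ht.1]
      nlinarith [norm_nonneg h, ht.2]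
    simp only [Metric.mem_ball, dist_eq_norm, add_sub_cancel_left]
    exact lt_of_le_of_lt hn hR
  -- the function g and its derivative
  set g : ℝ → Z := fun t => F (u + t • h) - t • (DF u h) with hg
  have hg' : ∀ t ∈ Set.Icc (0:ℝ) 1,
      HasDerivAt g ((DF (u + t • h)) h - DF u h) t := by
    intro t ht
    have h1 : HasDerivAt (fun t : ℝ => u + t • h) h t := by
      simpa using ((hasDerivAt_id t).smul_const h).const_add u
    have h2 : HasDerivAt (fun t : ℝ => F (u + t • h)) ((DF (u + t • h)) h) t :=
      (hdiff _ (hmem t ht)).comp_hasDerivAt t h1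
    have := h2.sub ((hasDerivAt_id t).smul_const (DF u h)); rw [one_smul] at this; exact this
  -- quadratic boundary function
  have hB : ∀ t : ℝ, HasDerivAt (fun t => L * ‖h‖ ^ 2 * (t ^ 2 / 2)) (L * ‖h‖ ^ 2 * t) t := by
    intro t
    have : HasDerivAt (fun t : ℝ => t ^ 2 / 2) t t := by
      simpa using ((hasDerivAt_pow 2 t).div_const 2)
    have := this.const_mul (L * ‖h‖ ^ 2)
    convert this using 1
  have bound : ∀ t ∈ Set.Ico (0:ℝ) 1, ‖(DF (u + t • h)) h - DF u h‖ ≤ L * ‖h‖ ^ 2 * t := by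
    intro t ht
    have htIcc : t ∈ Set.Icc (0:ℝ) 1 := ⟨ht.1, le_of_lt ht.2⟩
    have h1 : ‖(DF (u + t • h)) h - DF u h‖ ≤ ‖DF (u + t • h) - DF u‖ * ‖h‖ := by
      have := (DF (u + t • h) - DF u).le_opNorm h
      simpa using this
    have h2 : ‖DF (u + t • h) - DF u‖ ≤ L * ‖(u + t • h) - u‖ :=
      hlip _ (hmem t htIcc) u (Metric.mem_ball_self hR₀)
    have h3 : ‖(u + t • h) - u‖ = t * ‖h‖ := by
      rw [add_sub_cancel_left, norm_smul, Real.norm_eq_abs, abs_of_nonneg ht.1]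
    calc ‖(DF (u + t • h)) h - DF u h‖ ≤ ‖DF (u + t • h) - DF u‖ * ‖h‖ := h1
      _ ≤ L * ‖(u + t • h) - u‖ * ‖h‖ := by
          exact mul_le_mul_of_nonneg_right h2 (norm_nonneg _)
      _ = L * ‖h‖ ^ 2 * t := by rw [h3]; ring
  have hcont : ContinuousOn g (Set.Icc (0:ℝ) 1) := fun t ht =>
    ((hg' t ht).continuousAt).continuousWithinAt
  have key : ‖g 1‖ ≤ L * ‖h‖ ^ 2 * ((1:ℝ) ^ 2 / 2) := by
    have h0 : ‖g 0‖ ≤ L * ‖h‖ ^ 2 * ((0:ℝ) ^ 2 / 2) := by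
      simp [hg, hFu]
    exact image_norm_le_of_norm_deriv_right_le_deriv_boundary hcont
      (fun t ht => (hg' t ⟨ht.1, le_of_lt ht.2⟩).hasDerivWithinAt) h0 hB bound
      (Set.right_mem_Icc.mpr zero_le_one)
  have hg1 : g 1 = F uhat - DF u h := by simp [hg, hh]
  have hFuhat : ‖F uhat‖ ≤ 2 * ‖DF u‖ * ‖h‖ := by
    have h1 : ‖F uhat‖ ≤ ‖DF u h‖ + ‖F uhat - DF u h‖ := by
      have := norm_add_le (DF u h) (F uhat - DF u h)
      simpa using this
    have h2 : ‖DF u h‖ ≤ ‖DF u‖ * ‖h‖ := (DF u).le_opNorm h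
    have h3 : ‖F uhat - DF u h‖ ≤ L * ‖h‖ ^ 2 / 2 := by
      have := key
      rw [hg1] at this
      nlinarith [this]
    have h4 : L * ‖h‖ ^ 2 / 2 ≤ ‖DF u‖ * ‖h‖ := by
      nlinarith [norm_nonneg h, hL2]
    linarith
  have huu : ‖u - uhat‖ = ‖h‖ := by rw [hh, ← norm_neg]; congr 1; abel
  rw [huu]
  rw [div_mul_eq_mul_div, one_mul, div_mul_eq_mul_div]
  rw [div_le_iff₀ (by norm_num : (0:ℝ) < 2)]
  have : ‖F uhat‖ ≤ 2 * ‖DF u‖ * ‖h‖ := hFuhat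
  calc ‖DF u‖⁻¹ * ‖F uhat‖ ≤ ‖DF u‖⁻¹ * (2 * ‖DF u‖ * ‖h‖) := by
        exact mul_le_mul_of_nonneg_left this (inv_nonneg.mpr (norm_nonneg _))
    _ = ‖h‖ * 2 := by field_simp
end

section
/- Let X and Z be real Banach spaces, u ∈ X, R₀ > 0, and let F : X → Z be Fréchet differentiable on B(u,R₀) with derivative DF Lipschitz on B(u,R₀) with constant L > 0. Assume F(u) = 0 and that DF(u) is a continuous linear isomorphism of X onto Z with continuous inverse DF(u)⁻¹. Then for every û ∈ X with ‖û − u‖ < min(R₀, 1 / (L‖DF(u)⁻¹‖)), one has the upper a posteriori error bound ‖u − û‖ ≤ 2‖DF(u)⁻¹‖ ‖F(û)‖, where ‖DF(u)⁻¹‖ is the operator norm of the inverse map. -/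
open Set

/-- Quadratic Taylor remainder bound for a function whose derivative is Lipschitz on a ball. -/
lemma taylor_remainder_sq
    {X Z : Type*} [NormedAddCommGroup X] [NormedSpace ℝ X]
    [NormedAddCommGroup Z] [NormedSpace ℝ Z]
    (u : X) (R₀ : ℝ) (F : X → Z) (DF : X → X →L[ℝ] Z) (L : ℝ) (hL : 0 < L)
    (hdiff : ∀ v ∈ Metric.ball u R₀, HasFDerivAt F (DF v) v)
    (hlip : ∀ v ∈ Metric.ball u R₀, ∀ w ∈ Metric.ball u R₀,
      ‖DF v - DF w‖ ≤ L * ‖v - w‖)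
    (uhat : X) (hu : uhat ∈ Metric.ball u R₀) :
    ‖F uhat - F u - DF u (uhat - u)‖ ≤ L / 2 * ‖uhat - u‖ ^ 2 := by
  set h : X := uhat - u with hh
  have hnorm : ‖h‖ < R₀ := by
    simpa [hh, dist_eq_norm] using Metric.mem_ball.1 hu
  have hmem : ∀ t : ℝ, t ∈ Icc (0:ℝ) 1 → u + t • h ∈ Metric.ball u R₀ := by
    intro t ht
    rw [Metric.mem_ball, dist_eq_norm]
    have : ‖u + t • h - u‖ = |t| * ‖h‖ := by
      simp [norm_smul]
    rw [this, abs_of_nonneg ht.1]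
    calc t * ‖h‖ ≤ 1 * ‖h‖ := by
          exact mul_le_mul_of_nonneg_right ht.2 (norm_nonneg _)
      _ = ‖h‖ := one_mul _
      _ < R₀ := hnorm
  -- the function along the segment
  set g : ℝ → Z := fun t => F (u + t • h) - F u - t • (DF u h) with hg
  have hgderiv : ∀ t ∈ Icc (0:ℝ) 1,
      HasDerivAt g ((DF (u + t • h)) h - DF u h) t := by
    intro t ht
    have hline : HasDerivAt (fun t : ℝ => u + t • h) h t := by
      simpa using ((hasDerivAt_id t).smul_const h).const_add u
    have hF : HasDerivAt (fun t : ℝ => F (u + t • h)) ((DF (u + t • h)) h) t :=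
      (hdiff _ (hmem t ht)).comp_hasDerivAt t hline
    have h2 : HasDerivAt (fun t : ℝ => t • (DF u h)) (DF u h) t := by
      simpa using (hasDerivAt_id t).smul_const (DF u h)
    exact ((hF.sub (hasDerivAt_const t (F u))).sub h2).congr_deriv (by simp)
  have key : ∀ x ∈ Icc (0:ℝ) 1, ‖g x‖ ≤ L * ‖h‖ ^ 2 / 2 * x ^ 2 := by
    have hB : ∀ t : ℝ, HasDerivAt (fun t : ℝ => L * ‖h‖ ^ 2 / 2 * t ^ 2)
        (L * ‖h‖ ^ 2 * t) t := by
      intro t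
      have := (hasDerivAt_pow 2 t).const_mul (L * ‖h‖ ^ 2 / 2)
      exact this.congr_deriv (by push_cast; ring)
    refine image_norm_le_of_norm_deriv_right_le_deriv_boundary
      (f' := fun t => (DF (u + t • h)) h - DF u h)
      (fun t ht => ((hgderiv t ht).continuousAt).continuousWithinAt)
      (fun t ht => ((hgderiv t (Ico_subset_Icc_self ht)).hasDerivWithinAt))
      ?_ hB ?_
    · simp [hg]
    · intro t ht
      have ht' : t ∈ Icc (0:ℝ) 1 := Ico_subset_Icc_self ht
      have h1 : ‖(DF (u + t • h)) h - DF u h‖ ≤ ‖DF (u + t • h) - DF u‖ * ‖h‖ := by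
        have := (DF (u + t • h) - DF u).le_opNorm h
        simpa using this
      have h2 : ‖DF (u + t • h) - DF u‖ ≤ L * (t * ‖h‖) := by
        have := hlip _ (hmem t ht') u (Metric.mem_ball_self (lt_of_le_of_lt (norm_nonneg h) hnorm))
        simpa [norm_smul, abs_of_nonneg ht.1] using this
      calc ‖(DF (u + t • h)) h - DF u h‖ ≤ L * (t * ‖h‖) * ‖h‖ :=
            h1.trans (mul_le_mul_of_nonneg_right h2 (norm_nonneg _))
        _ = L * ‖h‖ ^ 2 * t := by ring
  have h1 := key 1 (right_mem_Icc.2 zero_le_one)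
  simp only [hg, one_smul, one_pow, mul_one] at h1
  have huh : u + h = uhat := by rw [hh]; abel
  rw [huh] at h1
  linarith

/-- Upper a posteriori error bound (right inequality of Theorem 1 of the appendix):
if `F u = 0` and `DF u` is a continuous linear isomorphism `e : X ≃L[ℝ] Z`, with `DF`
Lipschitz with constant `L > 0` on `B(u, R₀)`, then for every `uhat` with
`‖uhat - u‖ < min (R₀, 1 / (L ‖e.symm‖))` one has `‖u - uhat‖ ≤ 2 ‖e.symm‖ ‖F uhat‖`. -/
theorem upper_a_posteriori_bound
    {X Z : Type*} [NormedAddCommGroup X] [NormedSpace ℝ X] [CompleteSpace X]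
    [NormedAddCommGroup Z] [NormedSpace ℝ Z] [CompleteSpace Z]
    (u : X) (R₀ : ℝ) (hR₀ : 0 < R₀) (F : X → Z) (DF : X → X →L[ℝ] Z)
    (L : ℝ) (hL : 0 < L)
    (hdiff : ∀ v ∈ Metric.ball u R₀, HasFDerivAt F (DF v) v)
    (hlip : ∀ v ∈ Metric.ball u R₀, ∀ w ∈ Metric.ball u R₀,
      ‖DF v - DF w‖ ≤ L * ‖v - w‖)
    (hFu : F u = 0)
    (e : X ≃L[ℝ] Z) (he : (e : X →L[ℝ] Z) = DF u) :
    ∀ uhat : X, ‖uhat - u‖ < min R₀ (1 / (L * ‖(e.symm : Z →L[ℝ] X)‖)) →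
      ‖u - uhat‖ ≤ 2 * ‖(e.symm : Z →L[ℝ] X)‖ * ‖F uhat‖ := by
  intro uhat hlt
  set η : ℝ := ‖(e.symm : Z →L[ℝ] X)‖ with hη
  have hη0 : 0 < η := by
    by_contra hcon
    push_neg at hcon
    have : η = 0 := le_antisymm hcon (norm_nonneg _)
    rw [this] at hlt
    simp at hlt
    exact absurd (lt_of_le_of_lt (norm_nonneg _) hlt.2) (by norm_num)
  have hball : uhat ∈ Metric.ball u R₀ := by
    rw [Metric.mem_ball, dist_eq_norm]
    exact lt_of_lt_of_le hlt (min_le_left _ _)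
  have hsmall : L * η * ‖uhat - u‖ < 1 := by
    have h2 : ‖uhat - u‖ < 1 / (L * η) := lt_of_lt_of_le hlt (min_le_right _ _)
    have hLη : 0 < L * η := mul_pos hL hη0
    calc L * η * ‖uhat - u‖ < L * η * (1 / (L * η)) :=
          mul_lt_mul_of_pos_left h2 hLη
      _ = 1 := by field_simp
  set h : X := uhat - u with hh
  have htaylor : ‖F uhat - F u - DF u h‖ ≤ L / 2 * ‖h‖ ^ 2 :=
    taylor_remainder_sq u R₀ F DF L hL hdiff hlip uhat hball
  have hinv : ‖h‖ ≤ η * ‖DF u h‖ := by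
    have : h = e.symm (DF u h) := by
      rw [← he]; simp
    calc ‖h‖ = ‖e.symm ((DF u) h)‖ := by rw [← this]
      _ ≤ η * ‖DF u h‖ := (e.symm : Z →L[ℝ] X).le_opNorm _
  have hDFh : ‖DF u h‖ ≤ ‖F uhat‖ + L / 2 * ‖h‖ ^ 2 := by
    have : DF u h = F uhat - (F uhat - F u - DF u h) := by
      rw [hFu]; abel
    rw [this]
    calc ‖F uhat - (F uhat - F u - DF u h)‖ ≤ ‖F uhat‖ + ‖F uhat - F u - DF u h‖ :=
          norm_sub_le _ _
      _ ≤ ‖F uhat‖ + L / 2 * ‖h‖ ^ 2 := by linarith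
  have hmain : ‖h‖ ≤ η * ‖F uhat‖ + (1 / 2) * ‖h‖ := by
    have h1 : ‖h‖ ≤ η * (‖F uhat‖ + L / 2 * ‖h‖ ^ 2) :=
      hinv.trans (mul_le_mul_of_nonneg_left hDFh (le_of_lt hη0))
    have h2 : η * (L / 2 * ‖h‖ ^ 2) ≤ (1 / 2) * ‖h‖ := by
      have : η * (L / 2 * ‖h‖ ^ 2) = (L * η * ‖h‖) * ‖h‖ / 2 := by ring
      rw [this]
      have := mul_le_mul_of_nonneg_right (le_of_lt hsmall) (norm_nonneg h)
      linarith
    calc ‖h‖ ≤ η * ‖F uhat‖ + η * (L / 2 * ‖h‖ ^ 2) := by linarith [h1]; 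
      _ ≤ η * ‖F uhat‖ + (1 / 2) * ‖h‖ := by linarith
  have : ‖h‖ ≤ 2 * η * ‖F uhat‖ := by linarith
  calc ‖u - uhat‖ = ‖h‖ := by rw [hh, norm_sub_rev]
    _ ≤ 2 * η * ‖F uhat‖ := this
end

section
/- Let X and Y be real Hilbert spaces, u ∈ X, R₀ > 0, and let F : X → Y be Fréchet differentiable on B(u,R₀) with derivative DF Lipschitz on B(u,R₀) with constant L > 0. Assume F(u) = 0 and that DF(u) is a continuous linear isomorphism of X onto Y with continuous inverse DF(u)⁻¹. Then for every û ∈ X with ‖û − u‖ < min(R₀, 2‖DF(u)‖ / L, 1 / (L‖DF(u)⁻¹‖)), the two-sided error estimate (1/2)‖DF(u)‖⁻¹ ‖F(û)‖ ≤ ‖u − û‖ ≤ 2‖DF(u)⁻¹‖ ‖F(û)‖ holds, where the norms on X and Y are the Hilbert space norms and operator norms are the usual operator norms. -/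
open Set

/-- Sharp quadratic Taylor remainder bound for a function with Lipschitz derivative
along the segment from `u` to `u + v`. -/
lemma taylor_quadratic_bound
    {X Y : Type*} [NormedAddCommGroup X] [NormedSpace ℝ X]
    [NormedAddCommGroup Y] [NormedSpace ℝ Y]
    (u : X) (R₀ : ℝ) (F : X → Y) (DF : X → X →L[ℝ] Y)
    (L : ℝ) (hL : 0 < L)
    (hdiff : ∀ w ∈ Metric.ball u R₀, HasFDerivAt F (DF w) w)
    (hlip : ∀ w ∈ Metric.ball u R₀, ∀ w' ∈ Metric.ball u R₀,
      ‖DF w - DF w'‖ ≤ L * ‖w - w'‖)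
    (v : X) (hv : ‖v‖ < R₀) :
    ‖F (u + v) - F u - DF u v‖ ≤ L / 2 * ‖v‖ ^ 2 := by
  have hu0 : u ∈ Metric.ball u R₀ := by
    simpa [Metric.mem_ball] using lt_of_le_of_lt (norm_nonneg v) hv
  have hmem : ∀ t : ℝ, t ∈ Icc (0:ℝ) 1 → u + t • v ∈ Metric.ball u R₀ := by
    intro t ht
    have : ‖t • v‖ ≤ ‖v‖ := by
      rw [norm_smul, Real.norm_eq_abs, abs_of_nonneg ht.1]
      calc t * ‖v‖ ≤ 1 * ‖v‖ := by
            exact mul_le_mul_of_nonneg_right ht.2 (norm_nonneg v)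
        _ = ‖v‖ := one_mul _
    simp only [Metric.mem_ball, dist_eq_norm]
    have : ‖u + t • v - u‖ ≤ ‖v‖ := by simpa using this
    exact lt_of_le_of_lt this hv
  -- g t = F (u + t v) - t • (DF u v)
  set g : ℝ → Y := fun t => F (u + t • v) - F u - t • (DF u v) with hg
  have hgderiv : ∀ t : ℝ, t ∈ Icc (0:ℝ) 1 →
      HasDerivAt g (DF (u + t • v) v - DF u v) t := by
    intro t ht
    have hline : HasDerivAt (fun t : ℝ => u + t • v) v t := by
      simpa using ((hasDerivAt_id t).smul_const v).const_add u
    have h1 : HasDerivAt (fun t : ℝ => F (u + t • v)) (DF (u + t • v) v) t := by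
      exact (hdiff _ (hmem t ht)).comp_hasDerivAt t hline
    have h2 : HasDerivAt (fun t : ℝ => t • (DF u v)) (DF u v) t := by
      simpa using (hasDerivAt_id t).smul_const (DF u v)
    exact (h1.sub_const (F u)).sub h2
  have hb : ∀ t : ℝ, t ∈ Icc (0:ℝ) 1 →
      ‖DF (u + t • v) v - DF u v‖ ≤ (L * ‖v‖ ^ 2) * t := by
    intro t ht
    have h1 : ‖DF (u + t • v) v - DF u v‖ ≤ ‖DF (u + t • v) - DF u‖ * ‖v‖ := by
      have := (DF (u + t • v) - DF u).le_opNorm v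
      simpa using this
    have h2 : ‖DF (u + t • v) - DF u‖ ≤ L * ‖u + t • v - u‖ :=
      hlip _ (hmem t ht) _ hu0
    have h3 : ‖u + t • v - u‖ = t * ‖v‖ := by
      simp [norm_smul, abs_of_nonneg ht.1]
    calc ‖DF (u + t • v) v - DF u v‖ ≤ (L * (t * ‖v‖)) * ‖v‖ := by
          refine h1.trans ?_
          exact mul_le_mul_of_nonneg_right (h2.trans_eq (by rw [h3])) (norm_nonneg v)
      _ = (L * ‖v‖ ^ 2) * t := by ring
  -- comparison with B t = (L ‖v‖² / 2) t²
  have key : ‖g 1‖ ≤ (L * ‖v‖ ^ 2 / 2) * 1 ^ 2 := by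
    have := image_norm_le_of_norm_deriv_right_le_deriv_boundary
      (f := g) (f' := fun t => DF (u + t • v) v - DF u v)
      (a := 0) (b := 1)
      (B := fun t => (L * ‖v‖ ^ 2 / 2) * t ^ 2)
      (B' := fun t => (L * ‖v‖ ^ 2) * t)
      (fun t ht => ((hgderiv t ht).continuousAt).continuousWithinAt)
      (fun t ht => (hgderiv t (Ico_subset_Icc_self ht)).hasDerivWithinAt)
      (by simp [hg])
      (fun t => by
        have : HasDerivAt (fun t : ℝ => (L * ‖v‖ ^ 2 / 2) * t ^ 2)
            ((L * ‖v‖ ^ 2 / 2) * (2 * t)) t := by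
          simpa using ((hasDerivAt_pow 2 t).const_mul (L * ‖v‖ ^ 2 / 2))
        convert this using 1; ring)
      (fun t ht => hb t (Ico_subset_Icc_self ht))
    exact this (right_mem_Icc.2 zero_le_one)
  have hg1 : g 1 = F (u + v) - F u - DF u v := by simp [hg]
  rw [hg1] at key
  calc ‖F (u + v) - F u - DF u v‖ ≤ L * ‖v‖ ^ 2 / 2 * 1 ^ 2 := key
    _ = L / 2 * ‖v‖ ^ 2 := by ring

/-- Theorem 2 of the appendix (a posteriori error estimate of least-squares finite
element methods): for real Hilbert spaces `X`, `Y`, if `F u = 0`, `DF u` is a continuous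
linear isomorphism `e : X ≃L[ℝ] Y`, and `DF` is Lipschitz with constant `L > 0` on
`B(u, R₀)`, then for every `uhat` with
`‖uhat - u‖ < min (R₀, 2‖DF u‖/L, 1/(L‖e.symm‖))`,
`(1/2) ‖DF u‖⁻¹ ‖F uhat‖ ≤ ‖u - uhat‖ ≤ 2 ‖e.symm‖ ‖F uhat‖`. -/
theorem two_sided_a_posteriori_bound_hilbert
    {X Y : Type*} [NormedAddCommGroup X] [InnerProductSpace ℝ X] [CompleteSpace X]
    [NormedAddCommGroup Y] [InnerProductSpace ℝ Y] [CompleteSpace Y]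
    (u : X) (R₀ : ℝ) (hR₀ : 0 < R₀) (F : X → Y) (DF : X → X →L[ℝ] Y)
    (L : ℝ) (hL : 0 < L)
    (hdiff : ∀ v ∈ Metric.ball u R₀, HasFDerivAt F (DF v) v)
    (hlip : ∀ v ∈ Metric.ball u R₀, ∀ w ∈ Metric.ball u R₀,
      ‖DF v - DF w‖ ≤ L * ‖v - w‖)
    (hFu : F u = 0)
    (e : X ≃L[ℝ] Y) (he : (e : X →L[ℝ] Y) = DF u) :
    ∀ uhat : X, ‖uhat - u‖ < min R₀ (min (2 * ‖DF u‖ / L) (1 / (L * ‖(e.symm : Y →L[ℝ] X)‖))) →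
      (1 / 2) * ‖DF u‖⁻¹ * ‖F uhat‖ ≤ ‖u - uhat‖ ∧
      ‖u - uhat‖ ≤ 2 * ‖(e.symm : Y →L[ℝ] X)‖ * ‖F uhat‖ := by
  intro uhat h
  set v : X := uhat - u with hv
  set r : ℝ := ‖v‖ with hr
  have hr0 : 0 ≤ r := norm_nonneg _
  clear_value r v
  have h1 : r < R₀ := lt_of_lt_of_le h (min_le_left _ _)
  have h2 : r < 2 * ‖DF u‖ / L :=
    lt_of_lt_of_le h ((min_le_right _ _).trans (min_le_left _ _))
  have h3 : r < 1 / (L * ‖(e.symm : Y →L[ℝ] X)‖) :=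
    lt_of_lt_of_le h ((min_le_right _ _).trans (min_le_right _ _))
  have hDFu : 0 < ‖DF u‖ := by
    by_contra hc
    push_neg at hc
    have : ‖DF u‖ = 0 := le_antisymm hc (norm_nonneg _)
    rw [this] at h2
    simp at h2
    exact absurd (lt_of_le_of_lt hr0 h2) (by norm_num)
  have hEs : 0 < ‖(e.symm : Y →L[ℝ] X)‖ := by
    rcases lt_or_ge 0 ‖(e.symm : Y →L[ℝ] X)‖ with hp | hp
    · exact hp
    · exfalso
      have h0 : ‖(e.symm : Y →L[ℝ] X)‖ = 0 := le_antisymm hp (norm_nonneg _)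
      rw [h0, mul_zero] at h3
      simp at h3
      exact absurd (lt_of_le_of_lt hr0 h3) (by norm_num)
  have huv : u + v = uhat := by rw [hv]; abel
  -- Taylor remainder
  have taylor : ‖F uhat - DF u v‖ ≤ L / 2 * r ^ 2 := by
    have := taylor_quadratic_bound u R₀ F DF L hL hdiff hlip v (hr ▸ h1)
    rwa [huv, hFu, sub_zero, ← hr] at this
  -- lower bound
  have hnorm_uuhat : ‖u - uhat‖ = r := by rw [hr, hv, norm_sub_rev]
  constructor
  · have hFbound : ‖F uhat‖ ≤ 2 * ‖DF u‖ * r := by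
      have hsplit : ‖F uhat‖ ≤ ‖DF u v‖ + ‖F uhat - DF u v‖ := by
        calc ‖F uhat‖ = ‖DF u v + (F uhat - DF u v)‖ := by rw [add_sub_cancel]
          _ ≤ ‖DF u v‖ + ‖F uhat - DF u v‖ := norm_add_le _ _
      have h4 : ‖DF u v‖ ≤ ‖DF u‖ * r := hr ▸ (DF u).le_opNorm v
      have h5 : L / 2 * r ^ 2 ≤ ‖DF u‖ * r := by
        have : L / 2 * r ≤ ‖DF u‖ := by
          rw [lt_div_iff₀ hL] at h2
          nlinarith
        nlinarith
      calc ‖F uhat‖ ≤ ‖DF u‖ * r + L / 2 * r ^ 2 := by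
            refine hsplit.trans ?_
            exact add_le_add h4 taylor
        _ ≤ ‖DF u‖ * r + ‖DF u‖ * r := by linarith
        _ = 2 * ‖DF u‖ * r := by ring
    rw [hnorm_uuhat]
    have hmul := mul_le_mul_of_nonneg_left hFbound (inv_nonneg.2 hDFu.le)
    have heq : ‖DF u‖⁻¹ * (2 * ‖DF u‖ * r) = 2 * r := by
      field_simp
    rw [heq] at hmul
    linarith
  · -- upper bound
    have hev : (e : X →L[ℝ] Y) v = DF u v := by rw [he]
    have hback : r ≤ ‖(e.symm : Y →L[ℝ] X)‖ * ‖DF u v‖ := by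
      have : (e.symm : Y →L[ℝ] X) (DF u v) = v := by
        rw [← hev]
        exact e.symm_apply_apply v
      calc r = ‖(e.symm : Y →L[ℝ] X) (DF u v)‖ := by rw [this]; exact hr
        _ ≤ ‖(e.symm : Y →L[ℝ] X)‖ * ‖DF u v‖ := (e.symm : Y →L[ℝ] X).le_opNorm _
    have hDFv : ‖DF u v‖ ≤ ‖F uhat‖ + L / 2 * r ^ 2 := by
      calc ‖DF u v‖ = ‖F uhat - (F uhat - DF u v)‖ := by rw [sub_sub_cancel]
        _ ≤ ‖F uhat‖ + ‖F uhat - DF u v‖ := norm_sub_le _ _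
        _ ≤ ‖F uhat‖ + L / 2 * r ^ 2 := by linarith
    have hsmall : ‖(e.symm : Y →L[ℝ] X)‖ * (L / 2 * r ^ 2) ≤ r / 2 := by
      have h3' : r * (L * ‖(e.symm : Y →L[ℝ] X)‖) ≤ 1 := by
        rw [lt_div_iff₀ (by positivity)] at h3
        exact h3.le
      have h6 : r * (L * ‖(e.symm : Y →L[ℝ] X)‖) * r ≤ 1 * r :=
        mul_le_mul_of_nonneg_right h3' hr0
      have heq : ‖(e.symm : Y →L[ℝ] X)‖ * (L / 2 * r ^ 2) =
          r * (L * ‖(e.symm : Y →L[ℝ] X)‖) * r / 2 := by ring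
      rw [heq]
      linarith
    have : r ≤ ‖(e.symm : Y →L[ℝ] X)‖ * ‖F uhat‖ + r / 2 := by
      calc r ≤ ‖(e.symm : Y →L[ℝ] X)‖ * (‖F uhat‖ + L / 2 * r ^ 2) :=
            hback.trans (mul_le_mul_of_nonneg_left hDFv hEs.le)
        _ = ‖(e.symm : Y →L[ℝ] X)‖ * ‖F uhat‖ +
            ‖(e.symm : Y →L[ℝ] X)‖ * (L / 2 * r ^ 2) := by ring
        _ ≤ ‖(e.symm : Y →L[ℝ] X)‖ * ‖F uhat‖ + r / 2 := by linarith
    rw [hnorm_uuhat]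
    linarith
end
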